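/- Let B be a Boolean network with n gates, let v be a gate and t ≥ 0, and assume that N_+^t(v) induces a tree rooted at v in ⟨V,E⟩: every gate u ∈ N_+^t(v) is the endpoint of exactly one directed path of length at most t in E starting at v, and the only edges of E between gates of N_+^t(v) are the edges of these paths. Then for any s ≤ t, any state x ∈ {0,1}^n, and any gate u ∈ S_+^s(v): v affects u at time s on input x if and only if either (1) s = 0 and u = v, or (2) s > 0 and, letting w be the unique gate in S_+^{s−1}(v) ∩ S_-^1(u), v affects w at time s−1 on input x and w directly affects u on input B^{s−1}(x). -/

import Mathlib

/-- A Boolean network with `n` gates: each gate `v` has an indegree, a strictly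
increasing sequence of in-gates, and a Boolean function of that many arguments. -/
structure BoolNetwork (n : ℕ) where
  indeg : Fin n → ℕ
  inGates : (v : Fin n) → Fin (indeg v) → Fin n
  inGates_strictMono : ∀ v, StrictMono (inGates v)
  f : (v : Fin n) → (Fin (indeg v) → Bool) → Bool

namespace BoolNetwork

variable {n : ℕ}

/-- `(u, v) ∈ E` iff `u` is an in-gate of `v`. -/
def Edge (B : BoolNetwork n) (u v : Fin n) : Prop := ∃ i, B.inGates v i = u

/-- The synchronous update map of the network. -/
def step (B : BoolNetwork n) (x : Fin n → Bool) : Fin n → Bool :=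
  fun v => B.f v (fun i => x (B.inGates v i))

/-- `B.iter t x` is the state of the network at time `t` starting from state `x`. -/
def iter (B : BoolNetwork n) (t : ℕ) : (Fin n → Bool) → (Fin n → Bool) := B.step^[t]

/-- `x^v`: the state `x` with the `v`-th coordinate flipped. -/
def flip (x : Fin n → Bool) (v : Fin n) : Fin n → Bool :=
  Function.update x v (! x v)

/-- `S_+^t(v)`: the set of gates at the ends of directed paths
of length exactly `t` that start at `v`. -/
def Splus (B : BoolNetwork n) : ℕ → Fin n → Set (Fin n)
  | 0, v => {v}
  | t + 1, v => {u | ∃ w ∈ B.Splus t v, B.Edge w u}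

/-- `N_+^t(v) = ⋃_{s ≤ t} S_+^s(v)`: the out-neighborhood of `v` of radius `t`. -/
def Nplus (B : BoolNetwork n) (t : ℕ) (v : Fin n) : Set (Fin n) :=
  {u | ∃ s ≤ t, u ∈ B.Splus s v}

/-- Gate `v` affects gate `u` at time `t` on input `x`: `B_u^t(x) ≠ B_u^t(x^v)`. -/
def Affects (B : BoolNetwork n) (v u : Fin n) (t : ℕ) (x : Fin n → Bool) : Prop :=
  B.iter t x u ≠ B.iter t (flip x v) u

/-- Gate `w` directly affects gate `u` on input `y`: `B_u(y) ≠ B_u(y^w)`. -/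
def DirectlyAffects (B : BoolNetwork n) (w u : Fin n) (y : Fin n → Bool) : Prop :=
  B.step y u ≠ B.step (flip y w) u

/-- A directed path of length `l.length - 1` in the network, recorded as the list of
its successive gates. -/
def IsPathList (B : BoolNetwork n) (l : List (Fin n)) : Prop :=
  l.Chain' B.Edge

/-- `N_+^t(v)` induces a tree rooted at `v`: every gate of `N_+^t(v)` is the endpoint
of exactly one directed path of length at most `t` starting at `v`, and every edge
between gates of `N_+^t(v)` lies on one of these paths. -/
def TreeOn (B : BoolNetwork n) (t : ℕ) (v : Fin n) : Prop :=
  (∀ u ∈ B.Nplus t v, ∃! l : List (Fin n),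
      B.IsPathList l ∧ l.head? = some v ∧ l.getLast? = some u ∧ l.length ≤ t + 1) ∧
  (∀ w ∈ B.Nplus t v, ∀ u ∈ B.Nplus t v, B.Edge w u →
      ∃ l : List (Fin n), B.IsPathList l ∧ l.head? = some v ∧ l.length ≤ t + 1 ∧
        [w, u] <:+: l)

end BoolNetwork

namespace BoolNetwork

variable {n : ℕ} (B : BoolNetwork n)

lemma iter_succ' (s : ℕ) (x : Fin n → Bool) :
    B.iter (s + 1) x = B.step (B.iter s x) :=
  Function.iterate_succ_apply' B.step s x

lemma affects_mem_splus {v u : Fin n} {s : ℕ} {x : Fin n → Bool}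
    (h : B.Affects v u s x) : u ∈ B.Splus s v := by
  induction s generalizing u with
  | zero =>
    simp only [Affects, iter, Function.iterate_zero, id] at h
    by_contra hne
    have : u ≠ v := fun h' => hne (h' ▸ rfl)
    exact h (by simp [flip, Function.update_of_ne this])
  | succ s ih =>
    rw [Affects, iter_succ', iter_succ'] at h
    have : ∃ i, B.iter s x (B.inGates u i) ≠ B.iter s (flip x v) (B.inGates u i) := by
      by_contra hc
      push_neg at hc
      exact h (by unfold step; congr 1; funext i; exact hc i)
    obtain ⟨i, hi⟩ := this
    exact ⟨B.inGates u i, ih hi, i, rfl⟩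

lemma splus_path {s : ℕ} {v u : Fin n} (h : u ∈ B.Splus s v) :
    ∃ l : List (Fin n), B.IsPathList l ∧ l.head? = some v ∧
      l.getLast? = some u ∧ l.length = s + 1 := by
  induction s generalizing u with
  | zero =>
    have : u = v := h
    subst this
    exact ⟨[u], List.isChain_singleton u, rfl, rfl, rfl⟩
  | succ s ih =>
    obtain ⟨w, hw, hedge⟩ := h
    obtain ⟨l, hl, hhead, hlast, hlen⟩ := ih hw
    have hne : l ≠ [] := by intro h'; simp [h'] at hlen
    refine ⟨l ++ [u], ?_, ?_, ?_, ?_⟩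
    · exact hl.append (List.isChain_singleton u)
        (fun a ha b hb => by
          rw [hlast] at ha
          simp at ha hb
          subst ha; subst hb; exact hedge)
    · rw [List.head?_append_of_ne_nil _ hne, hhead]
    · exact List.getLast?_concat
    · simp [hlen]

/-- key uniqueness: the in-gate on the tree path is unique -/
lemma unique_pred {t : ℕ} {v : Fin n} (htree : B.TreeOn t v) {s : ℕ} (hs : s + 1 ≤ t)
    {u : Fin n} (hu : u ∈ B.Splus (s + 1) v) :
    ∃ w : Fin n, ∀ w' : Fin n, (w' ∈ B.Splus s v ∧ B.Edge w' u) ↔ w' = w := by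
  obtain ⟨w, hwmem, hwedge⟩ := hu
  refine ⟨w, fun w' => ⟨fun ⟨h1, h2⟩ => ?_, fun h => h ▸ ⟨hwmem, hwedge⟩⟩⟩
  -- build the two paths and use uniqueness
  have huN : u ∈ B.Nplus t v := ⟨s + 1, hs, w, hwmem, hwedge⟩
  obtain ⟨L, -, hLuniq⟩ := htree.1 u huN
  have build : ∀ w₀ : Fin n, w₀ ∈ B.Splus s v → B.Edge w₀ u →
      ∃ l : List (Fin n), (B.IsPathList (l ++ [u]) ∧ (l ++ [u]).head? = some v ∧
        (l ++ [u]).getLast? = some u ∧ (l ++ [u]).length ≤ t + 1) ∧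
        l.getLast? = some w₀ := by
    intro w₀ hmem hedge
    obtain ⟨l, hl, hhead, hlast, hlen⟩ := B.splus_path hmem
    have hne : l ≠ [] := by intro h'; simp [h'] at hlen
    refine ⟨l, ⟨?_, ?_, List.getLast?_concat, ?_⟩, hlast⟩
    · exact hl.append (List.isChain_singleton u)
        (fun a ha b hb => by
          rw [hlast] at ha; simp at ha hb; subst ha; subst hb; exact hedge)
    · rw [List.head?_append_of_ne_nil _ hne, hhead]
    · simp [hlen]; omega
  obtain ⟨l1, h1', hl1w⟩ := build w hwmem hwedge
  obtain ⟨l2, h2', hl2w⟩ := build w' h1 h2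
  have e1 : l1 ++ [u] = L := hLuniq _ h1'
  have e2 : l2 ++ [u] = L := hLuniq _ h2'
  have : l2 = l1 := by
    have := e2.trans e1.symm
    have := congrArg List.dropLast this
    simpa [List.dropLast_concat] using this
  rw [this, hl1w] at hl2w
  exact Option.some_injective _ hl2w.symm

end BoolNetwork

/-- If `N_+^t(v)` induces a tree rooted at `v`, then for any `s ≤ t`, any input `x`,
and any gate `u ∈ S_+^s(v)`: `v` affects `u` at time `s` on input `x` iff either
`s = 0` and `u = v`, or `s > 0` and, letting `w` be the unique gate in
`S_+^{s-1}(v) ∩ S_-^1(u)`, `v` affects `w` at time `s-1` on input `x` and `w`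
directly affects `u` on input `B^{s-1}(x)`. -/
theorem affects_iff_of_tree {n : ℕ} (B : BoolNetwork n) (v : Fin n) (t : ℕ)
    (htree : B.TreeOn t v) :
    ∀ s ≤ t, ∀ x : Fin n → Bool, ∀ u ∈ B.Splus s v,
      B.Affects v u s x ↔
        (s = 0 ∧ u = v) ∨
        (0 < s ∧ ∃ w : Fin n,
          (∀ w' : Fin n, (w' ∈ B.Splus (s - 1) v ∧ B.Edge w' u) ↔ w' = w) ∧
          B.Affects v w (s - 1) x ∧
          B.DirectlyAffects w u (B.iter (s - 1) x)) := by
  intro s hs x u hu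
  cases s with
  | zero =>
    have huv : u = v := hu
    subst huv
    constructor
    · intro _; exact Or.inl ⟨rfl, rfl⟩
    · intro _
      simp only [BoolNetwork.Affects, BoolNetwork.iter, Function.iterate_zero, id,
        BoolNetwork.flip, Function.update_self]
      cases x u <;> simp
  | succ s =>
    obtain ⟨w, hw⟩ := B.unique_pred htree hs hu
    have hwmem : w ∈ B.Splus s v ∧ B.Edge w u := (hw w).mpr rfl
    simp only [Nat.succ_sub_one]
    -- key: if v affects w at time s, then iter s (flip x v) agrees with
    -- flip (iter s x) w on all in-gates of u
    have key : B.Affects v w s x →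
        ∀ i, B.iter s (BoolNetwork.flip x v) (B.inGates u i)
          = BoolNetwork.flip (B.iter s x) w (B.inGates u i) := by
      intro haffw i
      by_cases hiw : B.inGates u i = w
      · rw [hiw]
        have h1 : BoolNetwork.flip (B.iter s x) w w = ! (B.iter s x w) :=
          Function.update_self _ _ _
        rw [h1]
        have hne2 : B.iter s x w ≠ B.iter s (BoolNetwork.flip x v) w := haffw
        revert hne2
        cases B.iter s x w <;> cases B.iter s (BoolNetwork.flip x v) w <;> simp
      · have hnot : B.iter s x (B.inGates u i)
            = B.iter s (BoolNetwork.flip x v) (B.inGates u i) := by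
          by_contra hne
          exact hiw ((hw _).mp ⟨B.affects_mem_splus hne, i, rfl⟩)
        have h2 : BoolNetwork.flip (B.iter s x) w (B.inGates u i)
            = B.iter s x (B.inGates u i) := Function.update_of_ne hiw _ _
        rw [h2]
        exact hnot.symm
    have stepeq : B.Affects v w s x →
        B.step (B.iter s (BoolNetwork.flip x v)) u
          = B.step (BoolNetwork.flip (B.iter s x) w) u := by
      intro haffw
      unfold BoolNetwork.step
      congr 1
      funext i
      exact key haffw i
    constructor
    · intro haff
      rw [BoolNetwork.Affects, B.iter_succ', B.iter_succ'] at haff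
      have : ∃ i, B.iter s x (B.inGates u i) ≠ B.iter s (BoolNetwork.flip x v) (B.inGates u i) := by
        by_contra hc
        push_neg at hc
        exact haff (by unfold BoolNetwork.step; congr 1; funext i; exact hc i)
      obtain ⟨i, hi⟩ := this
      have hiw : B.inGates u i = w :=
        (hw _).mp ⟨B.affects_mem_splus hi, i, rfl⟩
      have haffw : B.Affects v w s x := hiw ▸ hi
      refine Or.inr ⟨Nat.succ_pos s, w, hw, haffw, ?_⟩
      rw [BoolNetwork.DirectlyAffects, ← stepeq haffw]
      exact haff
    · rintro (⟨h0, -⟩ | ⟨-, w', hw', haffw, hdir⟩)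
      · exact absurd h0 (Nat.succ_ne_zero s)
      · have hww' : w = w' := (hw' w).mp hwmem
        subst hww'
        rw [BoolNetwork.Affects, B.iter_succ', B.iter_succ']
        rw [stepeq haffw]
        exact hdir
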